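/- If a graph G is the intersection graph of a Helly circular-arc model, then the clique matrix of G has the circular-ones property. -/

import Mathlib

/-- `S` is an arc of the circle `ℝ/ℤ`. -/
def IsArc (S : Set (AddCircle (1:ℝ))) : Prop :=
  ∃ s l : ℝ, 0 ≤ l ∧ l < 1 ∧
    S = {x | ∃ t : ℝ, 0 ≤ t ∧ t ≤ l ∧ x = (↑s : AddCircle (1:ℝ)) + ↑t}

/-- The intersection graph of a family of arcs. -/
def interGraph {ι : Type*} (A : ι → Set (AddCircle (1:ℝ))) : SimpleGraph ι where
  Adj i j := i ≠ j ∧ (A i ∩ A j).Nonempty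
  symm := by
    constructor
    intro i j h
    exact ⟨h.1.symm, by rw [Set.inter_comm]; exact h.2⟩
  loopless := by
    constructor
    intro i h
    exact h.1 rfl

/-- `S` is a maximal clique of `G`. -/
def IsMaxClique {V : Type*} (G : SimpleGraph V) (S : Set V) : Prop :=
  G.IsClique S ∧ ∀ T : Set V, G.IsClique T → S ⊆ T → T = S

/-- `M` has the circular-ones property. -/
def HasCircularOnes {ρ γ : Type*} (M : ρ → γ → Prop) : Prop :=
  ∃ (n : ℕ) (σ : γ ≃ Fin n), ∀ r, ∃ a l : ℕ,
    ∀ c, M r c ↔ ∃ j < l, (σ c : ℕ) = (a + j) % n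

/-- If `G` is the intersection graph of a Helly circular-arc model, then the
clique matrix of `G` (rows: vertices, columns: maximal cliques) has the
circular-ones property. -/
lemma mem_arc_iff {s l : ℝ} (hl1 : l < 1) (x : ℝ) :
    ((x : AddCircle (1:ℝ)) ∈ {y : AddCircle (1:ℝ) | ∃ t : ℝ, 0 ≤ t ∧ t ≤ l ∧ y = (↑s) + ↑t})
      ↔ Int.fract (x - s) ≤ l := by
  constructor
  · rintro ⟨t, ht0, htl, ht⟩
    have h0 : ((x - (s + t) : ℝ) : AddCircle (1:ℝ)) = 0 := by
      have h1 : ((x - (s+t) : ℝ) : AddCircle (1:ℝ)) = (x : AddCircle (1:ℝ)) - ((s+t:ℝ) : AddCircle (1:ℝ)) := rfl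
      have h2 : ((s+t:ℝ) : AddCircle (1:ℝ)) = (s:AddCircle (1:ℝ)) + (t:ℝ) := rfl
      rw [h1, ht, h2]; abel
    rw [AddCircle.coe_eq_zero_iff] at h0
    obtain ⟨k, hk⟩ := h0
    have hk' : x - (s + t) = (k : ℝ) := by simpa using hk.symm
    have hx : x - s = t + k := by linarith
    rw [hx, Int.fract_add_intCast, Int.fract_eq_self.mpr ⟨ht0, lt_of_le_of_lt htl hl1⟩]
    exact htl
  · intro h
    refine ⟨Int.fract (x - s), Int.fract_nonneg _, h, ?_⟩
    have key : (x : AddCircle (1:ℝ)) - ((s + Int.fract (x - s) : ℝ) : AddCircle (1:ℝ)) = 0 := by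
      have h2 : x - (s + Int.fract (x - s)) = (⌊x - s⌋ : ℝ) := by
        have h3 := Int.self_sub_fract (x - s)
        linarith
      have h4 : ((x - (s + Int.fract (x - s)) : ℝ) : AddCircle (1:ℝ)) = (x : AddCircle (1:ℝ)) - ((s + Int.fract (x - s) : ℝ) : AddCircle (1:ℝ)) := rfl
      rw [← h4, h2, AddCircle.coe_eq_zero_iff]
      exact ⟨⌊x - s⌋, by simp⟩
    rw [sub_eq_zero.mp key]; rfl

open Finset in
theorem helly_circular_arc_clique_matrix_circularOnes {ι : Type*} [Fintype ι]
    (A : ι → Set (AddCircle (1:ℝ))) (harc : ∀ i, IsArc (A i))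
    (hHelly : ∀ s : Set ι, (∀ i ∈ s, ∀ j ∈ s, (A i ∩ A j).Nonempty) →
      ∃ p, ∀ i ∈ s, p ∈ A i) :
    HasCircularOnes
      (fun (i : ι) (C : {S : Set ι // IsMaxClique (interGraph A) S}) => i ∈ C.1) := by
  classical
  haveI : Fact ((0:ℝ) < 1) := ⟨one_pos⟩
  set γ := {S : Set ι // IsMaxClique (interGraph A) S} with hγ
  haveI : Fintype γ := Fintype.ofFinite _
  -- arcs are nonempty
  have harcne : ∀ i, (A i).Nonempty := by
    intro i
    obtain ⟨s, l, hl0, hl1, hA⟩ := harc i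
    exact ⟨(s : AddCircle (1:ℝ)), by rw [hA]; exact ⟨0, le_refl _, hl0, by simp⟩⟩
  -- anchor points
  have hpair : ∀ C : γ, ∀ i ∈ C.1, ∀ j ∈ C.1, (A i ∩ A j).Nonempty := by
    intro C i hi j hj
    rcases eq_or_ne i j with rfl | hij
    · simpa using harcne i
    · exact (C.2.1 hi hj hij).2
  choose p hp using fun C : γ => hHelly C.1 (hpair C)
  -- membership criterion
  have hmem : ∀ (i : ι) (C : γ), i ∈ C.1 ↔ p C ∈ A i := by
    intro i C
    constructor
    · exact fun hi => hp C i hi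
    · intro hpa
      have hclique : (interGraph A).IsClique (insert i C.1) := by
        intro x hx y hy hxy
        have hx' : p C ∈ A x := by
          rcases hx with rfl | hx
          · exact hpa
          · exact hp C x hx
        have hy' : p C ∈ A y := by
          rcases hy with rfl | hy
          · exact hpa
          · exact hp C y hy
        exact ⟨hxy, ⟨p C, hx', hy'⟩⟩
      have := C.2.2 (insert i C.1) hclique (Set.subset_insert _ _)
      rw [← this]; exact Set.mem_insert _ _
  -- anchors are injective
  have hpinj : Function.Injective p := by
    intro C D hCD
    have hclique : (interGraph A).IsClique (C.1 ∪ D.1) := by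
      intro x hx y hy hxy
      have hx' : p C ∈ A x := by
        rcases hx with hx | hx
        · exact hp C x hx
        · rw [hCD]; exact hp D x hx
      have hy' : p C ∈ A y := by
        rcases hy with hy | hy
        · exact hp C y hy
        · rw [hCD]; exact hp D y hy
      exact ⟨hxy, ⟨p C, hx', hy'⟩⟩
    have h1 := C.2.2 (C.1 ∪ D.1) hclique Set.subset_union_left
    have h2 := D.2.2 (C.1 ∪ D.1) hclique Set.subset_union_right
    exact Subtype.ext (h1 ▸ h2)
  -- real representatives
  set q : γ → ℝ := fun C => ((AddCircle.equivIco 1 0) (p C) : ℝ) with hq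
  have hq01 : ∀ C, 0 ≤ q C ∧ q C < 1 := by
    intro C
    have := ((AddCircle.equivIco 1 0) (p C)).2
    simpa using this
  have hqcoe : ∀ C, ((q C : ℝ) : AddCircle (1:ℝ)) = p C := by
    intro C
    exact (AddCircle.equivIco 1 0).symm_apply_apply (p C)
  have hqinj : Function.Injective q := by
    intro C D h
    apply hpinj
    rw [← hqcoe C, ← hqcoe D, h]
  -- the ordering of the columns
  set n := Fintype.card γ with hn
  set Q : Finset ℝ := Finset.image q Finset.univ with hQ
  have hQcard : Q.card = n := by
    rw [hQ, Finset.card_image_of_injective _ hqinj, Finset.card_univ]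
  set e := Q.orderIsoOfFin hQcard with he
  have hmemQ : ∀ C, q C ∈ Q := fun C => Finset.mem_image_of_mem q (Finset.mem_univ C)
  set σ : γ ≃ Fin n :=
    { toFun := fun C => e.symm ⟨q C, hmemQ C⟩
      invFun := fun k => Classical.choose (Finset.mem_image.mp (e k).2)
      left_inv := by
        intro C
        apply hqinj
        have h1 := Classical.choose_spec (Finset.mem_image.mp (e (e.symm ⟨q C, hmemQ C⟩)).2)
        rw [h1.2]
        rw [OrderIso.apply_symm_apply]
      right_inv := by
        intro k
        have h1 := Classical.choose_spec (Finset.mem_image.mp (e k).2)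
        show e.symm ⟨q (Classical.choose (Finset.mem_image.mp (e k).2)), hmemQ _⟩ = k
        rw [OrderIso.symm_apply_eq]
        exact Subtype.ext h1.2 } with hσ
  -- rank formula
  have hrank : ∀ C : γ, ((σ C : Fin n) : ℕ) = (Finset.univ.filter fun D => q D < q C).card := by
    intro C
    have hbij : (Finset.univ.filter fun D => q D < q C).card
        = (Finset.Iio (σ C : Fin n)).card := by
      apply Finset.card_bij (fun D _ => (σ D : Fin n))
      · intro D hD
        rw [Finset.mem_Iio]
        have hlt : (⟨q D, hmemQ D⟩ : {x // x ∈ Q}) < ⟨q C, hmemQ C⟩ := by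
          rw [Subtype.mk_lt_mk]
          exact (Finset.mem_filter.mp hD).2
        exact (e.symm.lt_iff_lt).mpr hlt
      · intro D₁ h₁ D₂ h₂ hσeq
        have h2 : (⟨q D₁, hmemQ D₁⟩ : {x // x ∈ Q}) = ⟨q D₂, hmemQ D₂⟩ := e.symm.injective hσeq
        have h3 : q D₁ = q D₂ := Subtype.mk_eq_mk.mp h2
        exact hqinj h3
      · intro k hk
        rw [Finset.mem_Iio] at hk
        refine ⟨σ.symm k, ?_, ?_⟩
        · rw [Finset.mem_filter]
          refine ⟨Finset.mem_univ _, ?_⟩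
          have h1 : (σ (σ.symm k) : Fin n) = k := σ.apply_symm_apply k
          have h2 : e.symm ⟨q (σ.symm k), hmemQ _⟩ < e.symm ⟨q C, hmemQ C⟩ := by
            show (σ (σ.symm k) : Fin n) < σ C
            rw [h1]; exact hk
          have := (e.symm.lt_iff_lt).mp h2
          exact this
        · exact σ.apply_symm_apply k
    rw [hbij, Fin.card_Iio]
  have hrkn : ∀ C : γ, ((σ C : Fin n) : ℕ) < n := fun C => (σ C : Fin n).2
  refine ⟨n, σ, ?_⟩
  intro i
  obtain ⟨s, l, hl0, hl1, hAi⟩ := harc i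
  set c := Int.fract s with hc
  have hc0 : 0 ≤ c := Int.fract_nonneg s
  have hc1 : c < 1 := Int.fract_lt_one s
  set g : γ → ℝ := fun C => Int.fract (q C - c) with hg
  have hgval1 : ∀ C : γ, c ≤ q C → g C = q C - c := by
    intro C h
    exact Int.fract_eq_self.mpr ⟨by linarith, by linarith [(hq01 C).2]⟩
  have hgval2 : ∀ C : γ, q C < c → g C = q C - c + 1 := by
    intro C h
    have : g C = Int.fract (q C - c + 1) := (Int.fract_add_one _).symm
    rw [this]
    exact Int.fract_eq_self.mpr ⟨by linarith [(hq01 C).1], by linarith⟩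
  have hmem2 : ∀ C : γ, i ∈ C.1 ↔ g C ≤ l := by
    intro C
    rw [hmem i C, ← hqcoe C, hAi, mem_arc_iff hl1]
    have h1 : q C - s = q C - c - (⌊s⌋ : ℝ) := by
      have := Int.fract_add_floor s
      rw [hc]; push_cast; linarith [Int.self_sub_fract s]
    rw [h1, Int.fract_sub_intCast]
  -- counts
  set a := (Finset.univ.filter fun D : γ => q D < c).card with ha
  set m := (Finset.univ.filter fun D : γ => g D ≤ l).card with hm
  have hm_le : m ≤ n := by
    rw [hm, hn, ← Finset.card_univ]
    exact Finset.card_filter_le _ _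
  set r' : γ → ℕ := fun C => (Finset.univ.filter fun D : γ => g D < g C).card with hr'
  have hr'n : ∀ C : γ, r' C < n := by
    intro C
    rw [hr', hn]
    rw [← Finset.card_univ]
    apply Finset.card_lt_card
    rw [Finset.ssubset_iff_of_subset (Finset.subset_univ _)]
    exact ⟨C, Finset.mem_univ C, by simp⟩
  -- rotation formula
  have hrot : ∀ C : γ, ((σ C : Fin n) : ℕ) = (a + r' C) % n := by
    intro C
    rcases le_or_gt c (q C) with hcq | hcq
    · -- g C = q C - c
      have hgC := hgval1 C hcq
      have hsplit : (Finset.univ.filter fun D : γ => q D < q C)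
          = (Finset.univ.filter fun D : γ => q D < c) ∪ (Finset.univ.filter fun D : γ => g D < g C) := by
        ext D
        simp only [Finset.mem_union, Finset.mem_filter, Finset.mem_univ, true_and]
        constructor
        · intro h
          rcases lt_or_ge (q D) c with hd | hd
          · exact Or.inl hd
          · right; rw [hgval1 D hd, hgC]; linarith
        · rintro (h | h)
          · linarith
          · rcases lt_or_ge (q D) c with hd | hd
            · linarith
            · rw [hgval1 D hd, hgC] at h; linarith
      have hdisj : Disjoint (Finset.univ.filter fun D : γ => q D < c)
          (Finset.univ.filter fun D : γ => g D < g C) := by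
        rw [Finset.disjoint_left]
        intro D h1 h2
        rw [Finset.mem_filter] at h1 h2
        rw [hgval2 D h1.2, hgC] at h2
        linarith [(hq01 C).2, (hq01 D).1, h2.2]
      have hcard : ((σ C : Fin n) : ℕ) = a + r' C := by
        rw [hrank C, hsplit, Finset.card_union_of_disjoint hdisj]
      rw [hcard, Nat.mod_eq_of_lt (hcard ▸ hrkn C)]
    · -- g C = q C - c + 1
      have hgC := hgval2 C hcq
      have hsplit : (Finset.univ.filter fun D : γ => g D < g C)
          = (Finset.univ.filter fun D : γ => ¬ (q D < c)) ∪ (Finset.univ.filter fun D : γ => q D < q C) := by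
        ext D
        simp only [Finset.mem_union, Finset.mem_filter, Finset.mem_univ, true_and]
        constructor
        · intro h
          rcases lt_or_ge (q D) c with hd | hd
          · right; rw [hgval2 D hd, hgC] at h; linarith
          · exact Or.inl (not_lt.mpr hd)
        · rintro (h | h)
          · rw [hgval1 D (not_lt.mp h), hgC]
            linarith [(hq01 D).2, (hq01 C).1]
          · rw [hgval2 D (by linarith), hgC]
            linarith
      have hdisj : Disjoint (Finset.univ.filter fun D : γ => ¬ (q D < c))
          (Finset.univ.filter fun D : γ => q D < q C) := by
        rw [Finset.disjoint_left]
        intro D h1 h2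
        rw [Finset.mem_filter] at h1 h2
        exact h1.2 (by linarith [h2.2])
      have hcompl : a + (Finset.univ.filter fun D : γ => ¬ (q D < c)).card = n := by
        rw [ha, hn, ← Finset.card_univ]
        exact Finset.card_filter_add_card_filter_not _
      have hcard : r' C = (Finset.univ.filter fun D : γ => ¬ (q D < c)).card + ((σ C : Fin n) : ℕ) := by
        show (Finset.univ.filter fun D : γ => g D < g C).card = _
        rw [hsplit, Finset.card_union_of_disjoint hdisj, hrank C]
      rw [hcard, ← Nat.add_assoc, hcompl, Nat.add_mod_left, Nat.mod_eq_of_lt (hrkn C)]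
  -- downward closure
  have hBfwd : ∀ C : γ, g C ≤ l → r' C < m := by
    intro C hC
    rw [hr', hm]
    apply Finset.card_lt_card
    have hsub : (Finset.univ.filter fun D : γ => g D < g C) ⊆ (Finset.univ.filter fun D : γ => g D ≤ l) := by
      intro D hD
      rw [Finset.mem_filter] at hD ⊢
      exact ⟨hD.1, by linarith [hD.2]⟩
    rw [Finset.ssubset_iff_of_subset hsub]
    exact ⟨C, Finset.mem_filter.mpr ⟨Finset.mem_univ C, hC⟩, by simp⟩
  have hBbwd : ∀ C : γ, r' C < m → g C ≤ l := by
    intro C hC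
    by_contra hgl
    push_neg at hgl
    have hsub : (Finset.univ.filter fun D : γ => g D ≤ l) ⊆ (Finset.univ.filter fun D : γ => g D < g C) := by
      intro D hD
      rw [Finset.mem_filter] at hD ⊢
      exact ⟨hD.1, by linarith [hD.2]⟩
    have h2 : m ≤ r' C := Finset.card_le_card hsub
    omega
  refine ⟨a, m, ?_⟩
  intro C
  constructor
  · intro hiC
    exact ⟨r' C, hBfwd C ((hmem2 C).mp hiC), hrot C⟩
  · rintro ⟨j, hj, hje⟩
    have hjn : j < n := lt_of_lt_of_le hj hm_le
    have heq : (a + r' C) % n = (a + j) % n := by rw [← hrot C, hje]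
    have hmodeq : r' C ≡ j [MOD n] := Nat.ModEq.add_left_cancel' a heq
    have : r' C = j := by
      have h1 : r' C % n = j % n := hmodeq
      rwa [Nat.mod_eq_of_lt (hr'n C), Nat.mod_eq_of_lt hjn] at h1
    exact (hmem2 C).mpr (hBbwd C (this ▸ hj))
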